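/- Let M be the monoid defined by the presentation with generators a, a⁻¹, b, b⁻¹, h and relations aa⁻¹ = a⁻¹a = bb⁻¹ = b⁻¹b = 1, xh = hx and hxy = hyx for all x,y ∈ {a,a⁻¹,b,b⁻¹}, and h²a = h²a⁻¹ = h²b = h²b⁻¹ = h³ = h². Then the element represented by h² is a two-sided zero element of M. -/

import Mathlib

/-- The five generating letters `a, a⁻¹, b, b⁻¹, h`. -/
inductive L : Type
  | a | a' | b | b' | h
deriving DecidableEq

/-- Words over the five letters. -/
abbrev W : Type := FreeMonoid L

/-- The one-letter word. -/
def gen (x : L) : W := FreeMonoid.of x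

open L in
/-- The defining relations of the monoid `M`. -/
inductive rel : W → W → Prop
  | inv_aa' : rel (gen a * gen a') 1
  | inv_a'a : rel (gen a' * gen a) 1
  | inv_bb' : rel (gen b * gen b') 1
  | inv_b'b : rel (gen b' * gen b) 1
  | comm (x : L) (hx : x ≠ h) : rel (gen x * gen h) (gen h * gen x)
  | swap (x y : L) (hx : x ≠ h) (hy : y ≠ h) :
      rel (gen h * gen x * gen y) (gen h * gen y * gen x)
  | zero (x : L) (hx : x ≠ h) : rel (gen h * gen h * gen x) (gen h * gen h)
  | zero_h : rel (gen h * gen h * gen h) (gen h * gen h)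

/-- The congruence on the free monoid generated by the defining relations. -/
def Mcon : Con W := conGen rel

/-- The monoid `M` defined by the presentation. -/
abbrev M : Type := Mcon.Quotient

/-- The canonical projection from words to elements of `M`. -/
def π : W →* M := Mcon.mk'



lemma pi_rel {x y : W} (hxy : rel x y) : π x = π y :=
  Quotient.sound (ConGen.Rel.of _ _ hxy)

lemma right_absorb (x : L) : π (gen L.h * gen L.h) * π (gen x) = π (gen L.h * gen L.h) := by
  rw [← map_mul]
  by_cases hx : x = L.h
  · subst hx; exact pi_rel rel.zero_h
  · exact pi_rel (rel.zero x hx)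

lemma left_absorb (x : L) : π (gen x) * π (gen L.h * gen L.h) = π (gen L.h * gen L.h) := by
  by_cases hx : x = L.h
  · subst hx
    rw [← map_mul, show gen L.h * (gen L.h * gen L.h) = gen L.h * gen L.h * gen L.h from
      (mul_assoc _ _ _).symm]
    exact pi_rel rel.zero_h
  · have h1 : π (gen x * gen L.h) = π (gen L.h * gen x) := pi_rel (rel.comm x hx)
    have h2 : π (gen L.h * gen L.h * gen x) = π (gen L.h * gen L.h) := pi_rel (rel.zero x hx)
    calc π (gen x) * π (gen L.h * gen L.h)
        = π (gen x * gen L.h) * π (gen L.h) := by rw [map_mul, map_mul, mul_assoc]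
      _ = π (gen L.h * gen x) * π (gen L.h) := by rw [h1]
      _ = π (gen L.h) * (π (gen x) * π (gen L.h)) := by rw [map_mul, mul_assoc]
      _ = π (gen L.h) * (π (gen L.h) * π (gen x)) := by rw [← map_mul, h1, map_mul]
      _ = π (gen L.h * gen L.h * gen x) := by rw [map_mul, map_mul, mul_assoc]
      _ = π (gen L.h * gen L.h) := h2

/-- The element represented by `h²` is a two-sided zero of `M`. -/
theorem stmt_13 : ∀ m : M,
    π (gen L.h * gen L.h) * m = π (gen L.h * gen L.h) ∧
    m * π (gen L.h * gen L.h) = π (gen L.h * gen L.h) := by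
  intro m
  induction m using Con.induction_on with
  | _ w =>
    induction w using FreeMonoid.inductionOn' with
    | one =>
      constructor <;> simp [show ((1 : W) : M) = π 1 from rfl, map_one]
    | of_mul x w ih =>
      have hw : (↑(FreeMonoid.of x * w) : M) = π (gen x) * π w := by
        simp [π, gen, map_mul]
      constructor
      · rw [hw, ← mul_assoc]
        rw [show π (gen L.h * gen L.h) * π (gen x) = π (gen L.h * gen L.h) from
          right_absorb x]
        have := ih.1
        rw [show ((w : M)) = π w from rfl] at this
        exact this
      · rw [hw, mul_assoc]
        have := ih.2
        rw [show ((w : M)) = π w from rfl] at this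
        rw [this]
        exact left_absorb x
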